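/- Let M be a global NPC space with geodesic interpolation #_t, q ≥ 2, and let β be a p-contractive barycentric map. For a = (a_1,…,a_n) ∈ M^n, let x be the unique solution of x = β(x #_t μ_a) where μ_a = (1/n) Σ_i δ_{a_i} and t ∈ (0,1). Then for every z ∈ M: d^{2p}(z,x) ≤ (1/n) Σ_i d^{2p}(z,a_i) − (k_{2p}(1−t)/(2n)) Σ_i d^{2p}(x,a_i), where k_q is the uniform convexity constant of M. -/

import Mathlib

open MeasureTheory ENNReal Filter Topology

noncomputable section

variable {Ω M : Type*}

/-- A coupling of two measures on `M`. -/
def IsCoupling [MeasurableSpace M] (π : MeasureTheory.Measure (M × M))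
    (μ ν : MeasureTheory.Measure M) : Prop :=
  π.map Prod.fst = μ ∧ π.map Prod.snd = ν

/-- The `p`-Wasserstein (extended) distance between two measures. -/
def wassDist [MeasurableSpace M] [PseudoEMetricSpace M] (p : ℝ)
    (μ ν : MeasureTheory.Measure M) : ℝ≥0∞ :=
  ⨅ (π : MeasureTheory.Measure (M × M)) (_ : IsCoupling π μ ν),
    (∫⁻ xy, edist xy.1 xy.2 ^ p ∂π) ^ (1 / p)

/-- Finite `p`-th moment. -/
def HasFinitePMoment [MeasurableSpace M] [PseudoEMetricSpace M] (p : ℝ)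
    (μ : MeasureTheory.Measure M) : Prop :=
  ∀ x : M, ∫⁻ y, edist x y ^ p ∂μ < ⊤

/-- `p`-th Bochner integrability of an `M`-valued function. -/
def PIntegrable {mΩ : MeasurableSpace Ω} [PseudoEMetricSpace M] (p : ℝ)
    (P : MeasureTheory.Measure Ω) (φ : Ω → M) : Prop :=
  MeasureTheory.AEStronglyMeasurable φ P ∧ ∀ x : M, ∫⁻ ω, edist x (φ ω) ^ p ∂P < ⊤

/-- A `p`-contractive barycentric map. -/
structure IsBarycentric [MeasurableSpace M] [PseudoEMetricSpace M] (p : ℝ)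
    (β : MeasureTheory.Measure M → M) : Prop where
  map_dirac : ∀ x : M, β (MeasureTheory.Measure.dirac x) = x
  contract : ∀ μ ν : MeasureTheory.Measure M, MeasureTheory.IsProbabilityMeasure μ →
    MeasureTheory.IsProbabilityMeasure ν → HasFinitePMoment p μ → HasFinitePMoment p ν →
    edist (β μ) (β ν) ≤ wassDist p μ ν

/-- Empirical measure `(1/n) ∑_{k<n} δ_{φ(T^k ω)}`. -/
def empMeas [MeasurableSpace M] (φ : Ω → M) (T : Ω → Ω) (n : ℕ) (ω : Ω) :
    MeasureTheory.Measure M :=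
  (n : ℝ≥0∞)⁻¹ • ∑ k ∈ Finset.range n, MeasureTheory.Measure.dirac (φ (T^[k] ω))

/-- Uniform measure on a finite tuple. -/
def unifMeas [MeasurableSpace M] {n : ℕ} (x : Fin n → M) : MeasureTheory.Measure M :=
  (n : ℝ≥0∞)⁻¹ • ∑ i, MeasureTheory.Measure.dirac (x i)

lemma aemeasurable_unifMeas [MeasurableSpace M] [MeasurableSingletonClass M] {n : ℕ}
    (a : Fin n → M) {N : Type*} [MeasurableSpace N] (f : M → N) :
    AEMeasurable f (unifMeas a) := by
  unfold unifMeas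
  rw [← MeasureTheory.Measure.sum_fintype]
  refine AEMeasurable.smul_measure ?_ _
  refine AEMeasurable.sum_measure fun i => ?_
  exact ⟨fun _ => f (a i), measurable_const, by
    simp [Filter.EventuallyEq, MeasureTheory.ae_dirac_eq]⟩

lemma lintegral_unifMeas [MeasurableSpace M] [MeasurableSingletonClass M] {n : ℕ}
    (a : Fin n → M) (g : M → ℝ≥0∞) :
    ∫⁻ y, g y ∂(unifMeas a) = (n : ℝ≥0∞)⁻¹ * ∑ i, g (a i) := by
  unfold unifMeas
  rw [lintegral_smul_measure, ← MeasureTheory.Measure.sum_fintype, lintegral_sum_measure,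
    tsum_fintype]
  simp [lintegral_dirac]

lemma isProbabilityMeasure_unifMeas [MeasurableSpace M] {n : ℕ} (hn : 0 < n) (a : Fin n → M) :
    IsProbabilityMeasure (unifMeas a) := by
  constructor
  simp only [unifMeas, Measure.smul_apply, Measure.coe_finset_sum, Finset.sum_apply,
    Measure.dirac_apply_of_mem (Set.mem_univ _), smul_eq_mul]
  simp only [Finset.sum_const, Finset.card_univ, Fintype.card_fin, nsmul_eq_mul, mul_one]
  rw [ENNReal.inv_mul_cancel (by exact_mod_cast hn.ne') (by simp)]

theorem stmt19 [MetricSpace M] [CompleteSpace M] [MeasurableSpace M] [BorelSpace M]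
    (p : ℝ) (hp : 1 ≤ p)
    -- `interp x y t` is the point `x #_t y` on the geodesic from `x` to `y`
    (interp : M → M → ℝ → M)
    -- `k` is the uniform convexity constant `k_{2p}` of the global NPC space `M`
    (k : ℝ) (hk : 0 < k)
    (hconv : ∀ z x y : M, ∀ t ∈ Set.Icc (0 : ℝ) 1,
      dist z (interp x y t) ^ (2 * p)
        ≤ (1 - t) * dist z x ^ (2 * p) + t * dist z y ^ (2 * p)
          - (k / 2) * t * (1 - t) * dist x y ^ (2 * p))
    (β : MeasureTheory.Measure M → M) (hβ : IsBarycentric p β)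
    (n : ℕ) (hn : 0 < n) (a : Fin n → M)
    (t : ℝ) (ht : t ∈ Set.Ioo (0 : ℝ) 1)
    (x : M) (hx : x = β ((unifMeas a).map fun y => interp x y t)) :
    ∀ z : M,
      dist z x ^ (2 * p)
        ≤ (1 / (n : ℝ)) * ∑ i, dist z (a i) ^ (2 * p)
          - (k * (1 - t) / (2 * (n : ℝ))) * ∑ i, dist x (a i) ^ (2 * p) := by
  intro z
  have hp0 : (0:ℝ) < p := lt_of_lt_of_le one_pos hp
  have hn' : (0:ℝ) < n := by exact_mod_cast hn
  set f : M → M := fun y => interp x y t with hf_def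
  set ν : Measure M := (unifMeas a).map f with hν_def
  have hf : AEMeasurable f (unifMeas a) := aemeasurable_unifMeas a f
  have hprob_u : IsProbabilityMeasure (unifMeas a) := isProbabilityMeasure_unifMeas hn a
  have hprobν : IsProbabilityMeasure ν := Measure.isProbabilityMeasure_map hf
  have hmeas : ∀ w : M, Measurable fun y : M => edist w y ^ p :=
    fun w => (measurable_edist_right).pow_const p
  have hlν : ∀ w : M, ∫⁻ y, edist w y ^ p ∂ν
      = (n : ℝ≥0∞)⁻¹ * ∑ i, edist w (f (a i)) ^ p := by
    intro w
    rw [hν_def, lintegral_map' ((hmeas w).aemeasurable) hf, lintegral_unifMeas]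
  have hterm_lt : ∀ (w y : M), edist w y ^ p < ⊤ := fun w y =>
    ENNReal.rpow_lt_top_of_nonneg hp0.le (edist_ne_top w y)
  have hfinν : HasFinitePMoment p ν := by
    intro w
    rw [hlν]
    refine ENNReal.mul_lt_top ?_ ?_
    · exact ENNReal.inv_lt_top.mpr (by exact_mod_cast hn)
    · exact ENNReal.sum_lt_top.mpr fun i _ => hterm_lt _ _
  have hfinδ : HasFinitePMoment p (Measure.dirac z) := by
    intro w
    rw [lintegral_dirac]
    exact hterm_lt _ _
  -- the coupling
  have hcoup : IsCoupling ((Measure.dirac z).prod ν) (Measure.dirac z) ν := by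
    constructor
    · rw [MeasureTheory.Measure.map_fst_prod]
      simp [hprobν.measure_univ]
    · rw [MeasureTheory.Measure.map_snd_prod]
      simp
  have hW : wassDist p (Measure.dirac z) ν ≤ (∫⁻ y, edist z y ^ p ∂ν) ^ (1/p) := by
    refine le_trans (iInf_le_of_le ((Measure.dirac z).prod ν) (iInf_le _ hcoup)) ?_
    apply le_of_eq
    congr 1
    have hae : ∀ᵐ xy ∂((Measure.dirac z).prod ν), xy.1 = z := by
      rw [ae_iff]
      have hset : {xy : M × M | ¬ xy.1 = z} = ({z}ᶜ ×ˢ (Set.univ : Set M)) := by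
        ext xy; simp
      rw [hset, MeasureTheory.Measure.prod_prod]
      simp
    have hcongr : (fun xy : M × M => edist xy.1 xy.2 ^ p)
        =ᵐ[(Measure.dirac z).prod ν] fun xy => edist z xy.2 ^ p :=
      hae.mono fun xy h => by simp only [h]
    rw [lintegral_congr_ae hcongr]
    have hm2 : AEMeasurable (fun xy : M × M => edist z xy.2 ^ p) ((Measure.dirac z).prod ν) :=
      ((hmeas z).comp measurable_snd).aemeasurable
    rw [MeasureTheory.lintegral_prod _ hm2, lintegral_dirac]
  have key : edist z x ≤ ((n : ℝ≥0∞)⁻¹ * ∑ i, edist z (f (a i)) ^ p) ^ (1/p) := by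
    have hc := hβ.contract (Measure.dirac z) ν inferInstance hprobν hfinδ hfinν
    rw [hβ.map_dirac] at hc
    have h1 : edist z x = edist z (β ν) := congrArg (edist z) hx
    rw [h1]
    refine le_trans hc ?_
    refine le_trans hW (le_of_eq ?_)
    rw [hlν]
  -- translate to real numbers
  have hreal : dist z x ≤ ((1/(n:ℝ)) * ∑ i, dist z (f (a i)) ^ p) ^ (1/p) := by
    have hS : (0:ℝ) ≤ (1/(n:ℝ)) * ∑ i, dist z (f (a i)) ^ p := by positivity
    rw [← ENNReal.ofReal_le_ofReal_iff (by positivity), ← edist_dist]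
    refine key.trans (le_of_eq ?_)
    rw [← ENNReal.ofReal_rpow_of_nonneg hS (by positivity), ENNReal.ofReal_mul (by positivity)]
    congr 2
    · rw [ENNReal.ofReal_div_of_pos hn']
      simp [ENNReal.ofReal_natCast]
    · rw [ENNReal.ofReal_sum_of_nonneg (fun i _ => by positivity)]
      refine Finset.sum_congr rfl fun i _ => ?_
      rw [edist_dist, ENNReal.ofReal_rpow_of_nonneg dist_nonneg hp0.le]
  -- real arithmetic part
  set D2 := dist z x ^ (2*p) with hD2
  set S := (1/(n:ℝ)) * ∑ i, dist z (f (a i)) ^ p with hS_def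
  have hS0 : (0:ℝ) ≤ S := by positivity
  have h2 : D2 ≤ S ^ 2 := by
    have h := Real.rpow_le_rpow dist_nonneg hreal (by positivity : (0:ℝ) ≤ 2*p)
    calc D2 ≤ (S ^ (1/p)) ^ (2*p) := h
      _ = S ^ ((1/p)*(2*p)) := (Real.rpow_mul hS0 _ _).symm
      _ = S ^ (2:ℝ) := by rw [show (1/p)*(2*p) = 2 by field_simp]
      _ = S ^ 2 := by rw [← Real.rpow_natCast S 2]; norm_num
  have hsq : ∀ i, (dist z (f (a i)) ^ p)^2 = dist z (f (a i)) ^ (2*p) := by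
    intro i
    rw [← Real.rpow_natCast (dist z (f (a i)) ^ p) 2, ← Real.rpow_mul dist_nonneg]
    norm_num [mul_comm]
  have h3 : S ^ 2 ≤ (1/(n:ℝ)) * ∑ i, dist z (f (a i)) ^ (2*p) := by
    have hcs := sq_sum_le_card_mul_sum_sq (s := (Finset.univ : Finset (Fin n)))
      (f := fun i => dist z (f (a i)) ^ p)
    simp only [Finset.card_univ, Fintype.card_fin] at hcs
    have hcs' : (∑ i, dist z (f (a i)) ^ p) ^ 2 ≤ (n:ℝ) * ∑ i, dist z (f (a i)) ^ (2*p) := by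
      refine hcs.trans (le_of_eq ?_)
      congr 1
      exact Finset.sum_congr rfl fun i _ => hsq i
    rw [hS_def, mul_pow]
    calc (1/(n:ℝ))^2 * (∑ i, dist z (f (a i)) ^ p)^2
        ≤ (1/(n:ℝ))^2 * ((n:ℝ) * ∑ i, dist z (f (a i)) ^ (2*p)) := by
          exact mul_le_mul_of_nonneg_left hcs' (by positivity)
      _ = (1/(n:ℝ)) * ∑ i, dist z (f (a i)) ^ (2*p) := by field_simp
  have hchain : D2 ≤ (1/(n:ℝ)) * ∑ i, dist z (f (a i)) ^ (2*p) := h2.trans h3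
  have h4 : ∀ i, dist z (f (a i)) ^ (2*p)
      ≤ (1-t)*D2 + t*dist z (a i)^(2*p) - (k/2)*t*(1-t)*dist x (a i)^(2*p) :=
    fun i => hconv z x (a i) t ⟨ht.1.le, ht.2.le⟩
  have hsum : ∑ i, dist z (f (a i)) ^ (2*p)
      ≤ (n:ℝ)*((1-t)*D2) + t * ∑ i, dist z (a i)^(2*p)
        - (k/2)*t*(1-t) * ∑ i, dist x (a i)^(2*p) := by
    calc ∑ i, dist z (f (a i)) ^ (2*p)
        ≤ ∑ i, ((1-t)*D2 + t*dist z (a i)^(2*p) - (k/2)*t*(1-t)*dist x (a i)^(2*p)) :=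
          Finset.sum_le_sum fun i _ => h4 i
      _ = (n:ℝ)*((1-t)*D2) + t * ∑ i, dist z (a i)^(2*p)
          - (k/2)*t*(1-t) * ∑ i, dist x (a i)^(2*p) := by
        rw [Finset.sum_sub_distrib, Finset.sum_add_distrib]
        simp [Finset.mul_sum, Finset.sum_const, Finset.card_univ, mul_comm]
  have hfin' : D2 ≤ (1-t)*D2 + t*((1/(n:ℝ)) * ∑ i, dist z (a i)^(2*p))
      - (k/2)*t*(1-t)*((1/(n:ℝ)) * ∑ i, dist x (a i)^(2*p)) := by
    refine hchain.trans ?_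
    refine (mul_le_mul_of_nonneg_left hsum (by positivity : (0:ℝ) ≤ 1/(n:ℝ))).trans_eq ?_
    field_simp
  have hdiv : t * D2 ≤ t * ((1/(n:ℝ)) * ∑ i, dist z (a i)^(2*p)
      - (k*(1-t)/(2*(n:ℝ))) * ∑ i, dist x (a i)^(2*p)) := by
    ring_nf at hfin' ⊢
    have hD2' : dist z x ^ (p*2) = D2 := by rw [hD2]; ring_nf
    nlinarith [hfin', hD2']
  exact le_of_mul_le_mul_left hdiv ht.1
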